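/- Let Q be an n×n real symmetric positive definite matrix, A an n×n real matrix, P' an n×n real symmetric positive definite matrix, K := (P')⁻¹, and P an n×n real symmetric matrix. Then P ⪯ (Aᵀ K A + Q)⁻¹ in the Loewner order if and only if the 2n×2n block matrix with blocks [Q⁻¹ − P, Q⁻¹Aᵀ; A Q⁻¹, P' + A Q⁻¹ Aᵀ] is positive semidefinite. -/

import Mathlib

open Matrix

/-- Schur-complement/Woodbury characterization.  For `Q ≻ 0`, `P' ≻ 0`,
`K = (P')⁻¹` and `P` symmetric, one has `P ⪯ (Aᵀ K A + Q)⁻¹` iff the block matrix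
`[Q⁻¹ − P, Q⁻¹Aᵀ; A Q⁻¹, P' + A Q⁻¹ Aᵀ]` is positive semidefinite. -/
theorem loewner_le_iff_blockMatrix_posSemidef {n : ℕ}
    (Q A P' P : Matrix (Fin n) (Fin n) ℝ)
    (hQ : Q.PosDef) (hP' : P'.PosDef) (hP : P.IsSymm)
    (K : Matrix (Fin n) (Fin n) ℝ) (hK : K = P'⁻¹) :
    ((Aᵀ * K * A + Q)⁻¹ - P).PosSemidef ↔
      (Matrix.fromBlocks (Q⁻¹ - P) (Q⁻¹ * Aᵀ) (A * Q⁻¹)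
        (P' + A * Q⁻¹ * Aᵀ)).PosSemidef := by
  have hQinv : Q⁻¹.PosDef := hQ.inv
  have hQT : Qᵀ = Q := hQ.isHermitian
  have hQsymm : Q⁻¹ᵀ = Q⁻¹ := by rw [transpose_nonsing_inv, hQT]
  have hD : (P' + A * Q⁻¹ * Aᵀ).PosDef :=
    hP'.add_posSemidef (by simpa using hQinv.posSemidef.mul_mul_conjTranspose_same A)
  haveI : Invertible (P' + A * Q⁻¹ * Aᵀ) := hD.isUnit.invertible
  have hBH : (A * Q⁻¹) = (Q⁻¹ * Aᵀ)ᴴ := by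
    simp [conjTranspose_eq_transpose_of_trivial, transpose_mul, hQsymm]
  have hfb : fromBlocks (Q⁻¹ - P) (Q⁻¹ * Aᵀ) (A * Q⁻¹) (P' + A * Q⁻¹ * Aᵀ)
      = fromBlocks (Q⁻¹ - P) (Q⁻¹ * Aᵀ) (Q⁻¹ * Aᵀ)ᴴ (P' + A * Q⁻¹ * Aᵀ) := by rw [← hBH]
  rw [hfb, PosDef.fromBlocks₂₂ _ _ hD]
  have hwood : (Aᵀ * K * A + Q)⁻¹ = Q⁻¹ - Q⁻¹ * Aᵀ * (P' + A * Q⁻¹ * Aᵀ)⁻¹ * A * Q⁻¹ := by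
    rw [add_comm, hK]
    haveI := hP'.isUnit.invertible
    have hPP : P'⁻¹⁻¹ = P' := inv_inv_of_invertible P'
    have := Matrix.add_mul_mul_inv_eq_sub Q Aᵀ P'⁻¹ A hQ.isUnit
      (hP'.inv.isUnit) (by rw [hPP]; exact hD.isUnit)
    rw [hPP] at this
    exact this
  have heq : (Aᵀ * K * A + Q)⁻¹ - P
      = Q⁻¹ - P - Q⁻¹ * Aᵀ * (P' + A * Q⁻¹ * Aᵀ)⁻¹ * (Q⁻¹ * Aᵀ)ᴴ := by
    rw [hwood, ← hBH]
    noncomm_ring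
  rw [heq]
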